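/- In ℝ^{p,q} with p,q ≥ 2, for every v ∈ ℝⁿ and every R > 0, each of the sets (v + U_S) \ B(0,R), (v + U_T) \ B(0,R), and H_{w,α} \ B(0,R) (for w isotropic nonzero and α ∈ ℝ) is connected and nonempty, where B(0,R) is the closed Euclidean ball of radius R and U_S = {q > 0}, U_T = {q < 0}, H_{w,α} = {u : b(w,u) > α}. -/

import Mathlib

open scoped InnerProductSpace

/-- The standard symmetric bilinear form of signature `(p,q)` on Euclidean `ℝⁿ`,
`n = p + q`. -/
noncomputable def formB (p q : ℕ) (v w : EuclideanSpace ℝ (Fin (p + q))) : ℝ :=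
  ∑ i : Fin (p + q), (if (i : ℕ) < p then -(v i * w i) else v i * w i)


section helpers

variable {p q : ℕ}

lemma formB_comm (x y : EuclideanSpace ℝ (Fin (p + q))) : formB p q x y = formB p q y x := by
  unfold formB
  exact Finset.sum_congr rfl fun i _ => by split_ifs <;> ring

lemma formB_add_left (x y z : EuclideanSpace ℝ (Fin (p + q))) :
    formB p q (x + y) z = formB p q x z + formB p q y z := by
  unfold formB
  rw [← Finset.sum_add_distrib]
  exact Finset.sum_congr rfl fun i _ => by
    have : (x + y) i = x i + y i := rfl
    rw [this]; split_ifs <;> ring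

lemma formB_smul_left (t : ℝ) (x z : EuclideanSpace ℝ (Fin (p + q))) :
    formB p q (t • x) z = t * formB p q x z := by
  unfold formB
  rw [Finset.mul_sum]
  exact Finset.sum_congr rfl fun i _ => by
    have : (t • x) i = t * x i := rfl
    rw [this]; split_ifs <;> ring

lemma formB_add_right (x y z : EuclideanSpace ℝ (Fin (p + q))) :
    formB p q z (x + y) = formB p q z x + formB p q z y := by
  rw [formB_comm, formB_add_left, formB_comm x z, formB_comm y z]

lemma formB_smul_right (t : ℝ) (x z : EuclideanSpace ℝ (Fin (p + q))) :
    formB p q z (t • x) = t * formB p q z x := by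
  rw [formB_comm, formB_smul_left, formB_comm x z]

lemma formB_expand (a b : EuclideanSpace ℝ (Fin (p + q))) (t : ℝ) :
    formB p q (a + t • b) (a + t • b) =
      formB p q a a + 2 * t * formB p q a b + t ^ 2 * formB p q b b := by
  simp only [formB_add_left, formB_smul_left, formB_add_right, formB_smul_right]
  rw [formB_comm b a]; ring

lemma formB_eq_inner_of_high (x y : EuclideanSpace ℝ (Fin (p + q)))
    (hx : ∀ i : Fin (p + q), (i : ℕ) < p → x i = 0) : formB p q x y = ⟪x, y⟫_ℝ := by
  unfold formB
  rw [PiLp.inner_apply]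
  refine Finset.sum_congr rfl fun i _ => ?_
  simp only [RCLike.inner_apply, conj_trivial]
  by_cases h : (i : ℕ) < p
  · simp [h, hx i h]
  · simp [h]; ring

lemma formB_eq_neg_inner_of_low (x y : EuclideanSpace ℝ (Fin (p + q)))
    (hx : ∀ i : Fin (p + q), ¬ (i : ℕ) < p → x i = 0) : formB p q x y = -⟪x, y⟫_ℝ := by
  unfold formB
  rw [PiLp.inner_apply, ← Finset.sum_neg_distrib]
  refine Finset.sum_congr rfl fun i _ => ?_
  simp only [RCLike.inner_apply, conj_trivial]
  by_cases h : (i : ℕ) < p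
  · simp [h]; ring
  · simp [h, hx i h]

end helpers

lemma aux_lt_of_sq {R a : ℝ} (hR : 0 ≤ R) (ha : 0 ≤ a) (h : R ^ 2 < a ^ 2) : R < a := by
  nlinarith

lemma aux_le_of_sq {R a : ℝ} (hR : 0 ≤ R) (ha : 0 ≤ a) (h : R ^ 2 ≤ a ^ 2) : R ≤ a := by
  nlinarith

lemma isPreconnected_norm_gt (m : ℕ) (hm : 2 ≤ m) (ρ : ℝ) (hρ : 0 ≤ ρ) :
    IsPreconnected {x : EuclideanSpace ℝ (Fin m) | ρ < ‖x‖} := by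
  have hrank : 1 < Module.rank ℝ (EuclideanSpace ℝ (Fin m)) := by
    rw [← Module.finrank_eq_rank, finrank_euclideanSpace_fin]
    exact_mod_cast hm
  have hsph := (isConnected_sphere hrank (0 : EuclideanSpace ℝ (Fin m)) zero_le_one)
  have hprod : IsPreconnected ((Metric.sphere (0 : EuclideanSpace ℝ (Fin m)) 1) ×ˢ Set.Ioi ρ) :=
    hsph.isPreconnected.prod isPreconnected_Ioi
  have hcont : Continuous fun pz : EuclideanSpace ℝ (Fin m) × ℝ => pz.2 • pz.1 :=
    continuous_snd.smul continuous_fst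
  have himg := hprod.image _ hcont.continuousOn
  have heq : (fun pz : EuclideanSpace ℝ (Fin m) × ℝ => pz.2 • pz.1) ''
      ((Metric.sphere (0 : EuclideanSpace ℝ (Fin m)) 1) ×ˢ Set.Ioi ρ)
      = {x : EuclideanSpace ℝ (Fin m) | ρ < ‖x‖} := by
    ext x
    constructor
    · rintro ⟨⟨u, t⟩, ⟨hu, ht⟩, rfl⟩
      have hu' : ‖u‖ = 1 := by simpa using hu
      have ht' : ρ < t := ht
      simp only [Set.mem_setOf_eq, norm_smul, hu', mul_one, Real.norm_eq_abs]
      calc ρ < t := ht'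
      _ ≤ |t| := le_abs_self t
    · intro hx
      have hx' : ρ < ‖x‖ := hx
      have hxpos : 0 < ‖x‖ := lt_of_le_of_lt hρ hx'
      have hxne : ‖x‖ ≠ 0 := ne_of_gt hxpos
      refine ⟨(‖x‖⁻¹ • x, ‖x‖), ⟨?_, hx'⟩, ?_⟩
      · simp [norm_smul, abs_of_nonneg (inv_nonneg.2 (norm_nonneg x)), inv_mul_cancel₀ hxne]
      · simp [smul_smul, mul_inv_cancel₀ hxne]
  rwa [heq] at himg


lemma isPreconnected_far {n m : ℕ} (hm : 2 ≤ m) (P : Fin n → Prop)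
    (g : Fin m → Fin n) (hg : Function.Injective g) (hrange : ∀ i, P i ↔ ∃ j, g j = i)
    (ρ : ℝ) (hρ : 0 ≤ ρ) :
    IsPreconnected {u : EuclideanSpace ℝ (Fin n) | (∀ i, ¬ P i → u i = 0) ∧ ρ < ‖u‖} := by
  classical
  set φ : EuclideanSpace ℝ (Fin m) → EuclideanSpace ℝ (Fin n) :=
    fun x => WithLp.toLp 2 (fun i => if h : ∃ j, g j = i then x h.choose else 0) with hφdef
  have hφg : ∀ (x : EuclideanSpace ℝ (Fin m)) (j : Fin m), φ x (g j) = x j := by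
    intro x j
    have h : ∃ j', g j' = g j := ⟨j, rfl⟩
    simp only [hφdef, PiLp.toLp_apply, dif_pos h]
    rw [hg h.choose_spec]
  have hφ0 : ∀ (x : EuclideanSpace ℝ (Fin m)) (i : Fin n), ¬ P i → φ x i = 0 := by
    intro x i hi
    have h : ¬ ∃ j, g j = i := fun hc => hi ((hrange i).2 hc)
    simp only [hφdef, PiLp.toLp_apply, dif_neg h]
  have hφnorm : ∀ x : EuclideanSpace ℝ (Fin m), ‖φ x‖ = ‖x‖ := by
    intro x
    have hsum : ∑ i : Fin n, φ x i * φ x i = ∑ j : Fin m, x j * x j := by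
      have h1 : ∑ i : Fin n, φ x i * φ x i
          = ∑ i ∈ Finset.univ.image g, φ x i * φ x i := by
        refine (Finset.sum_subset (Finset.subset_univ _) ?_).symm
        intro i _ hi
        have h : ¬ ∃ j, g j = i := by
          rintro ⟨j, rfl⟩
          exact hi (Finset.mem_image.2 ⟨j, Finset.mem_univ j, rfl⟩)
        simp [hφdef, dif_neg h]
      rw [h1, Finset.sum_image (fun a _ b _ h => hg h)]
      simp [hφg]
    have h2 : ‖φ x‖ ^ 2 = ‖x‖ ^ 2 := by
      rw [← real_inner_self_eq_norm_sq, ← real_inner_self_eq_norm_sq,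
        PiLp.inner_apply, PiLp.inner_apply]
      simpa [RCLike.inner_apply, conj_trivial, pow_two] using hsum
    nlinarith [norm_nonneg (φ x), norm_nonneg x, h2]
  have hlin : IsLinearMap ℝ φ := by
    constructor
    · intro x y
      ext i
      have hr : (φ x + φ y) i = φ x i + φ y i := rfl
      rw [hr]
      by_cases h : ∃ j, g j = i
      · simp only [hφdef, PiLp.toLp_apply, dif_pos h]; rfl
      · simp only [hφdef, PiLp.toLp_apply, dif_neg h]; simp
    · intro c x
      ext i
      have hr : (c • φ x) i = c * φ x i := rfl
      rw [hr]
      by_cases h : ∃ j, g j = i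
      · simp only [hφdef, PiLp.toLp_apply, dif_pos h]; rfl
      · simp only [hφdef, PiLp.toLp_apply, dif_neg h]; simp
  have hcont : Continuous φ := hlin.mk' φ |>.continuous_of_finiteDimensional
  have hbase := isPreconnected_norm_gt m hm ρ hρ
  have himg := hbase.image φ hcont.continuousOn
  have heq : φ '' {x : EuclideanSpace ℝ (Fin m) | ρ < ‖x‖}
      = {u : EuclideanSpace ℝ (Fin n) | (∀ i, ¬ P i → u i = 0) ∧ ρ < ‖u‖} := by
    ext u
    constructor
    · rintro ⟨x, hx, rfl⟩
      exact ⟨fun i hi => hφ0 x i hi, by rw [hφnorm]; exact hx⟩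
    · rintro ⟨hsupp, hnorm⟩
      set x0 : EuclideanSpace ℝ (Fin m) := WithLp.toLp 2 (fun j => u (g j)) with hx0
      refine ⟨x0, ?_, ?_⟩
      · show ρ < ‖x0‖
        have hφu : φ x0 = u := by
          ext i
          by_cases h : ∃ j, g j = i
          · simp only [hφdef, PiLp.toLp_apply, dif_pos h]
            show u (g h.choose) = u i
            rw [h.choose_spec]
          · simp only [hφdef, PiLp.toLp_apply, dif_neg h]
            exact (hsupp i (fun hP => h ((hrange i).1 hP))).symm
        rw [← hφnorm x0, hφu]
        exact hnorm
      · show φ x0 = u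
        ext i
        by_cases h : ∃ j, g j = i
        · simp only [hφdef, PiLp.toLp_apply, dif_pos h]
          show u (g h.choose) = u i
          rw [h.choose_spec]
        · simp only [hφdef, PiLp.toLp_apply, dif_neg h]
          exact (hsupp i (fun hP => h ((hrange i).1 hP))).symm
  rwa [heq] at himg

lemma inner_comb {N : ℕ} (x : EuclideanSpace ℝ (Fin N)) (i j : Fin N) (a b : ℝ) :
    ⟪x, a • EuclideanSpace.single i (1:ℝ) + b • EuclideanSpace.single j (1:ℝ)⟫_ℝ
      = a * x i + b * x j := by
  rw [inner_add_right, real_inner_smul_right, real_inner_smul_right,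
    EuclideanSpace.inner_single_right, EuclideanSpace.inner_single_right]
  simp [mul_comm]

set_option maxHeartbeats 2000000 in
lemma cone_aux (p q : ℕ) (v : EuclideanSpace ℝ (Fin (p + q))) (R : ℝ) (hR : 0 < R)
    (P : Fin (p + q) → Prop) (m : ℕ) (hm : 2 ≤ m) (g : Fin m → Fin (p + q))
    (hg : Function.Injective g) (hrange : ∀ i, P i ↔ ∃ j, g j = i)
    (ε : ℝ) (hε2 : ε * ε = 1)
    (hform : ∀ x y : EuclideanSpace ℝ (Fin (p + q)),
      (∀ i, ¬ P i → x i = 0) → formB p q x y = ε * ⟪x, y⟫_ℝ)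
    (hform' : ∀ x y : EuclideanSpace ℝ (Fin (p + q)),
      (∀ i, P i → x i = 0) → formB p q x y = -(ε * ⟪x, y⟫_ℝ)) :
    IsConnected ({w | 0 < ε * formB p q (w - v) (w - v)} \
      Metric.closedBall (0 : EuclideanSpace ℝ (Fin (p + q))) R) := by
  classical
  have hball : ∀ x : EuclideanSpace ℝ (Fin (p + q)),
      x ∉ Metric.closedBall (0 : EuclideanSpace ℝ (Fin (p + q))) R ↔ R < ‖x‖ := by
    intro x
    rw [Metric.mem_closedBall, dist_zero_right]
    exact not_le
  set ρ : ℝ := R + ‖v‖ + 1 with hρdef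
  have hρ0 : 0 < ρ := by have := norm_nonneg v; simp only [hρdef]; linarith
  set j1 : Fin (p + q) := g ⟨0, by omega⟩ with hj1def
  set j2 : Fin (p + q) := g ⟨1, by omega⟩ with hj2def
  have hj12 : j1 ≠ j2 := by
    intro h
    have := hg h
    simp [Fin.ext_iff] at this
  have hPj1 : P j1 := (hrange j1).2 ⟨_, rfl⟩
  have hPj2 : P j2 := (hrange j2).2 ⟨_, rfl⟩
  set u₀ : EuclideanSpace ℝ (Fin (p + q)) := EuclideanSpace.single j1 (ρ + 1) with hu₀def
  set Far : Set (EuclideanSpace ℝ (Fin (p + q))) :=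
    (fun u => v + u) '' {u | (∀ i, ¬ P i → u i = 0) ∧ ρ < ‖u‖} with hFardef
  have hFarpre : IsPreconnected Far :=
    (isPreconnected_far hm P g hg hrange ρ hρ0.le).image _
      (continuous_const.add continuous_id).continuousOn
  have hFarsub : Far ⊆ {w | 0 < ε * formB p q (w - v) (w - v)} \
      Metric.closedBall (0 : EuclideanSpace ℝ (Fin (p + q))) R := by
    rintro - ⟨u, ⟨husupp, hunorm⟩, rfl⟩
    constructor
    · show 0 < ε * formB p q (v + u - v) (v + u - v)
      have hrw : v + u - v = u := by abel
      rw [hrw, hform u u husupp, ← mul_assoc, hε2, one_mul, real_inner_self_eq_norm_sq]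
      nlinarith [hunorm, hρ0]
    · rw [hball]
      have h1 : ‖u‖ ≤ ‖v + u‖ + ‖v‖ := by
        have h2 := norm_sub_le (v + u) v
        have h3 : v + u - v = u := by abel
        rw [h3] at h2
        linarith
      simp only [hρdef] at hunorm
      linarith
  have hx0Far : v + u₀ ∈ Far := by
    refine ⟨u₀, ⟨?_, ?_⟩, rfl⟩
    · intro i hi
      have hne : i ≠ j1 := fun h => hi (h ▸ hPj1)
      simp [hu₀def, EuclideanSpace.single_apply, hne]
    · rw [hu₀def, EuclideanSpace.norm_single, Real.norm_eq_abs, abs_of_pos (by linarith)]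
      linarith
  refine ⟨⟨v + u₀, hFarsub hx0Far⟩, ?_⟩
  apply isPreconnected_of_forall (v + u₀)
  intro y hy
  obtain ⟨hy1', hy2'⟩ := hy
  have hy1 : 0 < ε * formB p q (y - v) (y - v) := hy1'
  have hy2 : R < ‖y‖ := (hball y).1 hy2'
  set z : EuclideanSpace ℝ (Fin (p + q)) := y - v with hzdef
  set zP : EuclideanSpace ℝ (Fin (p + q)) := WithLp.toLp 2 (fun i => if P i then z i else 0) with hzPdef
  set zN : EuclideanSpace ℝ (Fin (p + q)) := WithLp.toLp 2 (fun i => if P i then 0 else z i) with hzNdef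
  have hsplit : zP + zN = z := by
    ext i
    have h : (zP + zN) i = zP i + zN i := rfl
    rw [h]
    by_cases hp : P i <;> simp [hzPdef, hzNdef, hp]
  have hzPsupp : ∀ i, ¬ P i → zP i = 0 := fun i hi => by simp [hzPdef, hi]
  have hzNsupp : ∀ i, P i → zN i = 0 := fun i hi => by simp [hzNdef, hi]
  have hzPzN : ⟪zP, zN⟫_ℝ = 0 := by
    rw [PiLp.inner_apply]
    apply Finset.sum_eq_zero
    intro i _
    by_cases hp : P i <;> simp [RCLike.inner_apply, hzPdef, hzNdef, hp]
  -- choose the direction w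
  obtain ⟨a, b, hab, hzab⟩ : ∃ a b : ℝ, (a ≠ 0 ∨ b ≠ 0) ∧ a * z j1 + b * z j2 = 0 := by
    by_cases hz0 : z j1 = 0 ∧ z j2 = 0
    · exact ⟨1, 0, Or.inl one_ne_zero, by rw [hz0.1]; ring⟩
    · refine ⟨z j2, -(z j1), ?_, by ring⟩
      rcases not_and_or.1 hz0 with h | h
      · exact Or.inr (by simpa using h)
      · exact Or.inl h
  obtain ⟨w, hwsupp, hww, hzPw, hzNw, hyw⟩ :
      ∃ w : EuclideanSpace ℝ (Fin (p + q)), (∀ i, ¬ P i → w i = 0) ∧ 0 < ⟪w, w⟫_ℝ ∧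
        ⟪zP, w⟫_ℝ = 0 ∧ ⟪zN, w⟫_ℝ = 0 ∧ 0 ≤ ⟪y, w⟫_ℝ := by
    set w0 : EuclideanSpace ℝ (Fin (p + q)) :=
      a • EuclideanSpace.single j1 (1:ℝ) + b • EuclideanSpace.single j2 (1:ℝ) with hw0def
    have hw0j1 : w0 j1 = a := by
      have h : w0 j1 = a * (if j1 = j1 then (1:ℝ) else 0) + b * (if j1 = j2 then 1 else 0) := by
        simp [hw0def, EuclideanSpace.single_apply]
      rw [h]
      simp [hj12]
    have hw0j2 : w0 j2 = b := by
      have h : w0 j2 = a * (if j2 = j1 then (1:ℝ) else 0) + b * (if j2 = j2 then 1 else 0) := by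
        simp [hw0def, EuclideanSpace.single_apply]
      rw [h]
      simp [hj12.symm]
    have hw0supp : ∀ i, ¬ P i → w0 i = 0 := by
      intro i hi
      have h1 : i ≠ j1 := fun h => hi (h ▸ hPj1)
      have h2 : i ≠ j2 := fun h => hi (h ▸ hPj2)
      have h : w0 i = a * (if i = j1 then (1:ℝ) else 0) + b * (if i = j2 then 1 else 0) := by
        simp [hw0def, EuclideanSpace.single_apply]
      rw [h]
      simp [h1, h2]
    have hw0w0 : 0 < ⟪w0, w0⟫_ℝ := by
      rw [hw0def, inner_comb, ← hw0def, hw0j1, hw0j2]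
      rcases hab with h | h
      · nlinarith [mul_self_pos.2 h, mul_self_nonneg b]
      · nlinarith [mul_self_pos.2 h, mul_self_nonneg a]
    have hzPw0 : ⟪zP, w0⟫_ℝ = 0 := by
      rw [hw0def, inner_comb]
      have h1 : zP j1 = z j1 := by simp [hzPdef, hPj1]
      have h2 : zP j2 = z j2 := by simp [hzPdef, hPj2]
      rw [h1, h2, hzab]
    have hzNw0 : ⟪zN, w0⟫_ℝ = 0 := by
      rw [hw0def, inner_comb, hzNsupp j1 hPj1, hzNsupp j2 hPj2]
      ring
    rcases le_or_gt 0 ⟪y, w0⟫_ℝ with h | h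
    · exact ⟨w0, hw0supp, hw0w0, hzPw0, hzNw0, h⟩
    · refine ⟨-w0, ?_, ?_, ?_, ?_, ?_⟩
      · intro i hi
        have : (-w0) i = -(w0 i) := rfl
        rw [this, hw0supp i hi, neg_zero]
      · rwa [inner_neg_neg]
      · rw [inner_neg_right, hzPw0, neg_zero]
      · rw [inner_neg_right, hzNw0, neg_zero]
      · rw [inner_neg_right]
        linarith
  have hnw : 0 < ‖w‖ := by
    have h : ⟪w, w⟫_ℝ = ‖w‖ ^ 2 := real_inner_self_eq_norm_sq w
    nlinarith [norm_nonneg w]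
  set L : ℝ := R + ‖v‖ + ‖zN‖ + ρ + 1 with hLdef
  have hL : 0 < L := by have := norm_nonneg v; have := norm_nonneg zN; simp only [hLdef]; linarith
  set T : ℝ := L / ‖w‖ with hTdef
  have hTw : T * ‖w‖ = L := div_mul_cancel₀ _ hnw.ne'
  have hT0 : 0 ≤ T := div_nonneg hL.le hnw.le
  -- formB facts
  have hfzw : formB p q z w = 0 := by
    rw [formB_comm, hform w z hwsupp]
    have h : ⟪w, z⟫_ℝ = 0 := by
      rw [← hsplit, inner_add_right]
      have c1 := real_inner_comm zP w
      have c2 := real_inner_comm zN w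
      linarith [hzPw, hzNw]
    rw [h, mul_zero]
  have hfww : formB p q w w = ε * ⟪w, w⟫_ℝ := hform w w hwsupp
  -- the three pieces
  set c : EuclideanSpace ℝ (Fin (p + q)) := zP + T • w with hcdef
  have hcsupp : ∀ i, ¬ P i → c i = 0 := by
    intro i hi
    have h : c i = zP i + T * w i := rfl
    rw [h, hzPsupp i hi, hwsupp i hi]
    ring
  have hzPTw : ⟪zP, T • w⟫_ℝ = 0 := by rw [real_inner_smul_right, hzPw, mul_zero]
  have hcc : ⟪c, c⟫_ℝ = ⟪zP, zP⟫_ℝ + T ^ 2 * ⟪w, w⟫_ℝ := by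
    rw [hcdef, real_inner_add_add_self, hzPTw, real_inner_smul_left, real_inner_smul_right]
    ring
  have hcnorm : L ≤ ‖c‖ := by
    apply aux_le_of_sq hL.le (norm_nonneg c)
    have h1 : ‖c‖ ^ 2 = ⟪c, c⟫_ℝ := (real_inner_self_eq_norm_sq c).symm
    have h2 : ⟪w, w⟫_ℝ = ‖w‖ ^ 2 := real_inner_self_eq_norm_sq w
    have h3 : 0 ≤ ⟪zP, zP⟫_ℝ := real_inner_self_nonneg
    have h4 : L ^ 2 = (T * ‖w‖) ^ 2 := by rw [hTw]
    nlinarith [hcc]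
  have hfzzexp : formB p q z z = ε * (⟪zP, zP⟫_ℝ - ⟪zN, zN⟫_ℝ) := by
    rw [← hsplit, formB_add_left, formB_add_right, formB_add_right,
      hform zP zP hzPsupp, hform zP zN hzPsupp, hform' zN zP hzNsupp, hform' zN zN hzNsupp,
      hzPzN]
    have c1 : ⟪zN, zP⟫_ℝ = 0 := by rw [real_inner_comm]; exact hzPzN
    rw [c1]
    ring
  have hkey : 0 < ⟪zP, zP⟫_ℝ - ⟪zN, zN⟫_ℝ := by
    rw [hfzzexp, ← mul_assoc, hε2, one_mul] at hy1
    exact hy1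
  set segA : Set (EuclideanSpace ℝ (Fin (p + q))) :=
    (fun t : ℝ => y + t • w) '' Set.Icc 0 T with hsegAdef
  set segB : Set (EuclideanSpace ℝ (Fin (p + q))) :=
    (fun s : ℝ => v + c + s • zN) '' Set.Icc 0 1 with hsegBdef
  have hsegApre : IsPreconnected segA :=
    isPreconnected_Icc.image _
      (continuous_const.add (continuous_id.smul continuous_const)).continuousOn
  have hsegBpre : IsPreconnected segB :=
    isPreconnected_Icc.image _
      (continuous_const.add (continuous_id.smul continuous_const)).continuousOn
  have hsegAsub : segA ⊆ {w | 0 < ε * formB p q (w - v) (w - v)} \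
      Metric.closedBall (0 : EuclideanSpace ℝ (Fin (p + q))) R := by
    rintro - ⟨t, ⟨ht0, htT⟩, rfl⟩
    constructor
    · show 0 < ε * formB p q (y + t • w - v) (y + t • w - v)
      have hrw : y + t • w - v = z + t • w := by rw [hzdef]; abel
      rw [hrw, formB_expand, hfzw, hfww]
      have key : ε * (formB p q z z + 2 * t * 0 + t ^ 2 * (ε * ⟪w, w⟫_ℝ))
          = ε * formB p q z z + (ε * ε) * (t ^ 2 * ⟪w, w⟫_ℝ) := by ring
      rw [key, hε2, one_mul]
      have h1 : 0 ≤ t ^ 2 * ⟪w, w⟫_ℝ := mul_nonneg (sq_nonneg t) hww.le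
      have h2 : 0 < ε * formB p q z z := hy1
      linarith
    · rw [hball]
      have hnorm : ‖y‖ ^ 2 ≤ ‖y + t • w‖ ^ 2 := by
        rw [norm_add_sq_real]
        have h1 : 0 ≤ ⟪y, t • w⟫_ℝ := by
          rw [real_inner_smul_right]
          exact mul_nonneg ht0 hyw
        nlinarith [sq_nonneg ‖t • w‖]
      have hR2 : R ^ 2 < ‖y‖ ^ 2 := by nlinarith
      exact aux_lt_of_sq hR.le (norm_nonneg _) (lt_of_lt_of_le hR2 hnorm)
  have hsegBsub : segB ⊆ {w | 0 < ε * formB p q (w - v) (w - v)} \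
      Metric.closedBall (0 : EuclideanSpace ℝ (Fin (p + q))) R := by
    rintro - ⟨s, ⟨hs0, hs1⟩, rfl⟩
    constructor
    · show 0 < ε * formB p q (v + c + s • zN - v) (v + c + s • zN - v)
      have hrw : v + c + s • zN - v = c + s • zN := by abel
      rw [hrw, formB_expand]
      have hfcc : formB p q c c = ε * ⟪c, c⟫_ℝ := hform c c hcsupp
      have hfczN : formB p q c zN = 0 := by
        rw [hform c zN hcsupp]
        have h : ⟪c, zN⟫_ℝ = 0 := by
          have hwzN : ⟪w, zN⟫_ℝ = 0 := by rw [real_inner_comm]; exact hzNw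
          rw [hcdef, inner_add_left, real_inner_smul_left, hzPzN, hwzN]
          ring
        rw [h, mul_zero]
      have hfzNzN : formB p q zN zN = -(ε * ⟪zN, zN⟫_ℝ) := hform' zN zN hzNsupp
      rw [hfcc, hfczN, hfzNzN]
      have key : ε * (ε * ⟪c, c⟫_ℝ + 2 * s * 0 + s ^ 2 * -(ε * ⟪zN, zN⟫_ℝ))
          = (ε * ε) * (⟪c, c⟫_ℝ - s ^ 2 * ⟪zN, zN⟫_ℝ) := by ring
      rw [key, hε2, one_mul]
      have h1 : 0 ≤ T ^ 2 * ⟪w, w⟫_ℝ := mul_nonneg (sq_nonneg T) hww.le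
      have h2 : s ^ 2 * ⟪zN, zN⟫_ℝ ≤ ⟪zN, zN⟫_ℝ := by
        have h3 : 0 ≤ ⟪zN, zN⟫_ℝ := real_inner_self_nonneg
        have h4 : 0 ≤ (1 - s ^ 2) := by nlinarith
        nlinarith [mul_nonneg h4 h3]
      rw [hcc]
      linarith
    · rw [hball]
      have h2 : ‖v + s • zN‖ ≤ ‖v‖ + ‖zN‖ := by
        have h3 := norm_add_le v (s • zN)
        have h4 : ‖s • zN‖ = |s| * ‖zN‖ := by rw [norm_smul, Real.norm_eq_abs]
        have h5 : |s| ≤ 1 := by rw [abs_of_nonneg hs0]; exact hs1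
        have h6 : 0 ≤ ‖zN‖ := norm_nonneg zN
        nlinarith
      have h7 : ‖c‖ ≤ ‖v + c + s • zN‖ + ‖v + s • zN‖ := by
        have h8 : c = (v + c + s • zN) - (v + s • zN) := by abel
        calc ‖c‖ = ‖(v + c + s • zN) - (v + s • zN)‖ := by rw [← h8]
        _ ≤ ‖v + c + s • zN‖ + ‖v + s • zN‖ := norm_sub_le _ _
      simp only [hLdef] at hcnorm
      linarith
  -- joints
  have hyA : y ∈ segA := ⟨0, ⟨le_refl 0, hT0⟩, by simp⟩
  have hyTA : y + T • w ∈ segA := ⟨T, ⟨hT0, le_refl T⟩, rfl⟩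
  have hyTB : y + T • w ∈ segB := by
    refine ⟨1, ⟨zero_le_one, le_refl 1⟩, ?_⟩
    show v + c + (1:ℝ) • zN = y + T • w
    rw [one_smul, hcdef]
    have h : v + (zP + T • w) + zN = v + (zP + zN) + T • w := by abel
    rw [h, hsplit, hzdef]
    abel
  have hendB : v + c ∈ segB := ⟨0, ⟨le_refl 0, zero_le_one⟩, by simp⟩
  have hendFar : v + c ∈ Far := by
    refine ⟨c, ⟨hcsupp, ?_⟩, rfl⟩
    simp only [hLdef] at hcnorm
    linarith [hR, norm_nonneg v, norm_nonneg zN]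
  refine ⟨segA ∪ segB ∪ Far, ?_, ?_, ?_, ?_⟩
  · exact Set.union_subset (Set.union_subset hsegAsub hsegBsub) hFarsub
  · exact Or.inr hx0Far
  · exact Or.inl (Or.inl hyA)
  · refine IsPreconnected.union (v + c) (Or.inr hendB) hendFar ?_ hFarpre
    exact IsPreconnected.union (y + T • w) hyTA hyTB hsegApre hsegBpre

set_option maxHeartbeats 2000000 in
/-- For `p, q ≥ 2`, each of `(v + U_S) \ B(0,R)`, `(v + U_T) \ B(0,R)` and
`H_{w₀,α} \ B(0,R)` (with `w₀` isotropic nonzero) is connected and nonempty, where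
`B(0,R)` is the closed Euclidean ball of radius `R > 0`. -/
theorem complement_of_ball_connected (p q : ℕ) (hp : 2 ≤ p) (hq : 2 ≤ q)
    (v : EuclideanSpace ℝ (Fin (p + q))) (R : ℝ) (hR : 0 < R) :
    IsConnected ({w | formB p q (w - v) (w - v) > 0} \
      Metric.closedBall (0 : EuclideanSpace ℝ (Fin (p + q))) R) ∧
    IsConnected ({w | formB p q (w - v) (w - v) < 0} \
      Metric.closedBall (0 : EuclideanSpace ℝ (Fin (p + q))) R) ∧
    ∀ w₀ : EuclideanSpace ℝ (Fin (p + q)), w₀ ≠ 0 → formB p q w₀ w₀ = 0 → ∀ α : ℝ,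
      IsConnected ({u | formB p q w₀ u > α} \
        Metric.closedBall (0 : EuclideanSpace ℝ (Fin (p + q))) R) := by
  classical
  have hball : ∀ x : EuclideanSpace ℝ (Fin (p + q)),
      x ∉ Metric.closedBall (0 : EuclideanSpace ℝ (Fin (p + q))) R ↔ R < ‖x‖ := by
    intro x
    rw [Metric.mem_closedBall, dist_zero_right]
    exact not_le
  refine ⟨?_, ?_, ?_⟩
  · -- spacelike case
    have h := cone_aux p q v R hR (fun i => p ≤ (i : ℕ)) q hq (fun j => Fin.natAdd p j)
      (fun a b hab => by
        have : p + (a : ℕ) = p + (b : ℕ) := by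
          have := congrArg (fun x : Fin (p + q) => (x : ℕ)) hab
          simpa using this
        exact Fin.ext (by omega))
      (fun i => by
        constructor
        · intro hi
          refine ⟨⟨(i : ℕ) - p, by omega⟩, ?_⟩
          apply Fin.ext
          simp [Fin.natAdd]
          omega
        · rintro ⟨j, rfl⟩
          simp [Fin.natAdd])
      1 (by norm_num)
      (fun x y hx => by
        rw [formB_eq_inner_of_high x y (fun i hi => hx i (by omega))]; ring)
      (fun x y hx => by
        rw [formB_eq_neg_inner_of_low x y (fun i hi => hx i (by omega))]; ring)
    have heq : {w | formB p q (w - v) (w - v) > 0} =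
        {w | 0 < 1 * formB p q (w - v) (w - v)} := by
      ext u; simp only [Set.mem_setOf_eq, one_mul, gt_iff_lt]
    rw [heq]
    exact h
  · -- timelike case
    have h := cone_aux p q v R hR (fun i => (i : ℕ) < p) p hp (fun j => Fin.castAdd q j)
      (fun a b hab => by
        have : (a : ℕ) = (b : ℕ) := by
          have := congrArg (fun x : Fin (p + q) => (x : ℕ)) hab
          simpa using this
        exact Fin.ext this)
      (fun i => by
        constructor
        · intro hi
          exact ⟨⟨(i : ℕ), hi⟩, by apply Fin.ext; simp [Fin.castAdd]⟩
        · rintro ⟨j, rfl⟩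
          simpa [Fin.castAdd] using j.isLt)
      (-1) (by norm_num)
      (fun x y hx => by
        rw [formB_eq_neg_inner_of_low x y (fun i hi => hx i hi)]; ring)
      (fun x y hx => by
        rw [formB_eq_inner_of_high x y (fun i hi => hx i hi)]; ring)
    have heq : {w | formB p q (w - v) (w - v) < 0} =
        {w | 0 < (-1) * formB p q (w - v) (w - v)} := by
      ext u
      simp only [Set.mem_setOf_eq]
      constructor <;> intro h' <;> linarith
    rw [heq]
    exact h
  · -- half-space case
    intro w₀ hw₀ _hiso α
    set c : EuclideanSpace ℝ (Fin (p + q)) :=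
      WithLp.toLp 2 (fun i : Fin (p + q) => if (i : ℕ) < p then -(w₀ i) else w₀ i) with hcdef
    have hc_form : ∀ u, formB p q w₀ u = ⟪c, u⟫_ℝ := by
      intro u
      rw [PiLp.inner_apply]
      unfold formB
      refine Finset.sum_congr rfl fun i _ => ?_
      simp only [RCLike.inner_apply, conj_trivial]
      by_cases h : (i : ℕ) < p <;> simp [hcdef, h] <;> ring
    obtain ⟨i₁, hi₁⟩ : ∃ i, w₀ i ≠ 0 := by
      by_contra h
      push_neg at h
      exact hw₀ (by ext i; exact h i)
    have hci : c i₁ ≠ 0 := by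
      by_cases h : (i₁ : ℕ) < p <;> simp [hcdef, h, hi₁]
    have hc0 : c ≠ 0 := by
      intro h
      apply hci
      rw [h]
      rfl
    have hnc : 0 < ‖c‖ := norm_pos_iff.2 hc0
    have hcc : 0 < ⟪c, c⟫_ℝ := by
      rw [real_inner_self_eq_norm_sq]
      exact pow_pos hnc 2
    -- direction d orthogonal to c
    set j₀ : Fin (p + q) := if (i₁ : ℕ) = 0 then ⟨1, by omega⟩ else ⟨0, by omega⟩ with hj₀def
    have hij : i₁ ≠ j₀ := by
      intro hcon
      rw [Fin.ext_iff] at hcon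
      by_cases h : (i₁ : ℕ) = 0 <;> simp [hj₀def, h] at hcon <;> omega
    obtain ⟨d, hdd, hcd, hyd0⟩ : ∃ d : EuclideanSpace ℝ (Fin (p + q)),
        0 < ⟪d, d⟫_ℝ ∧ ⟪c, d⟫_ℝ = 0 ∧ True := by
      set d0 : EuclideanSpace ℝ (Fin (p + q)) :=
        (c j₀) • EuclideanSpace.single i₁ (1:ℝ) + (-(c i₁)) • EuclideanSpace.single j₀ (1:ℝ)
        with hd0def
      have hd0i₁ : d0 i₁ = c j₀ := by
        have h : d0 i₁ = c j₀ * (if i₁ = i₁ then (1:ℝ) else 0)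
            + (-(c i₁)) * (if i₁ = j₀ then 1 else 0) := by
          simp [hd0def, EuclideanSpace.single_apply]
          try (split_ifs <;> ring)
        rw [h]
        simp [hij]
      have hd0j₀ : d0 j₀ = -(c i₁) := by
        have h : d0 j₀ = c j₀ * (if j₀ = i₁ then (1:ℝ) else 0)
            + (-(c i₁)) * (if j₀ = j₀ then 1 else 0) := by
          simp [hd0def, EuclideanSpace.single_apply]
          try (split_ifs <;> ring)
        rw [h]
        simp [hij.symm]
      have h1 : ⟪c, d0⟫_ℝ = c j₀ * c i₁ + (-(c i₁)) * c j₀ := by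
        rw [hd0def, inner_comb]
      have h2 : ⟪d0, d0⟫_ℝ = c j₀ * d0 i₁ + (-(c i₁)) * d0 j₀ := by
        rw [hd0def, inner_comb]
      refine ⟨d0, ?_, by rw [h1]; ring, trivial⟩
      rw [h2, hd0i₁, hd0j₀]
      nlinarith [mul_self_pos.2 hci, mul_self_nonneg (c j₀)]
    clear hyd0
    have hnd : 0 < ‖d‖ := by
      have h := real_inner_self_eq_norm_sq d
      nlinarith [norm_nonneg d]
    -- the target set
    have hseteq : {u | formB p q w₀ u > α} = {u | α < ⟪c, u⟫_ℝ} := by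
      ext u
      simp only [Set.mem_setOf_eq, gt_iff_lt, hc_form u]
    rw [hseteq]
    set K : ℝ := max α (R * ‖c‖) + 1 with hKdef
    set F : Set (EuclideanSpace ℝ (Fin (p + q))) := {u | K ≤ ⟪c, u⟫_ℝ} with hFdef
    have hFpre : IsPreconnected F := by
      refine (convex_halfSpace_ge ?_ K).isPreconnected
      exact ⟨fun a b => inner_add_right c a b, fun r x => real_inner_smul_right c x r⟩
    have hFsub : F ⊆ {u | α < ⟪c, u⟫_ℝ} \
        Metric.closedBall (0 : EuclideanSpace ℝ (Fin (p + q))) R := by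
      intro u hu
      have hu' : K ≤ ⟪c, u⟫_ℝ := hu
      constructor
      · show α < ⟪c, u⟫_ℝ
        have := le_max_left α (R * ‖c‖)
        simp only [hKdef] at hu'
        linarith
      · rw [hball]
        have h1 := real_inner_le_norm c u
        have h2 := le_max_right α (R * ‖c‖)
        simp only [hKdef] at hu'
        nlinarith [hnc]
    set x₀ : EuclideanSpace ℝ (Fin (p + q)) := (K / ⟪c, c⟫_ℝ) • c with hx₀def
    have hx₀F : x₀ ∈ F := by
      show K ≤ ⟪c, x₀⟫_ℝ
      rw [hx₀def, real_inner_smul_right, div_mul_cancel₀ _ hcc.ne']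
    refine ⟨⟨x₀, hFsub hx₀F⟩, ?_⟩
    apply isPreconnected_of_forall x₀
    intro y hy
    obtain ⟨hy1', hy2'⟩ := hy
    have hy1 : α < ⟪c, y⟫_ℝ := hy1'
    have hy2 : R < ‖y‖ := (hball y).1 hy2'
    -- sign-adjusted direction
    obtain ⟨e, hee, hce, hye⟩ : ∃ e : EuclideanSpace ℝ (Fin (p + q)),
        0 < ⟪e, e⟫_ℝ ∧ ⟪c, e⟫_ℝ = 0 ∧ 0 ≤ ⟪y, e⟫_ℝ := by
      rcases le_or_gt 0 ⟪y, d⟫_ℝ with h | h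
      · exact ⟨d, hdd, hcd, h⟩
      · refine ⟨-d, by rwa [inner_neg_neg], by rw [inner_neg_right, hcd, neg_zero], ?_⟩
        rw [inner_neg_right]
        linarith
    have hne : 0 < ‖e‖ := by
      have h := real_inner_self_eq_norm_sq e
      nlinarith [norm_nonneg e]
    set S : ℝ := (|K| + |⟪c, y⟫_ℝ|) / ⟪c, c⟫_ℝ with hSdef
    have hS0 : 0 ≤ S := div_nonneg (by positivity) hcc.le
    have hSc : S * ⟪c, c⟫_ℝ = |K| + |⟪c, y⟫_ℝ| := div_mul_cancel₀ _ hcc.ne'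
    have hKle : K ≤ ⟪c, y⟫_ℝ + S * ⟪c, c⟫_ℝ := by
      rw [hSc]
      have h1 := le_abs_self K
      have h2 := neg_abs_le ⟪c, y⟫_ℝ
      linarith
    set T : ℝ := (R + 1 + S * ‖c‖) / ‖e‖ with hTdef
    have hT0 : 0 ≤ T := by
      apply div_nonneg _ hne.le
      have := mul_nonneg hS0 (norm_nonneg c)
      linarith
    have hTe : T * ‖e‖ = R + 1 + S * ‖c‖ := div_mul_cancel₀ _ hne.ne'
    set y1 : EuclideanSpace ℝ (Fin (p + q)) := y + T • e with hy1def
    have hy1norm : R + 1 + S * ‖c‖ ≤ ‖y1‖ := by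
      apply aux_le_of_sq (by nlinarith [mul_nonneg hS0 (norm_nonneg c)]) (norm_nonneg y1)
      rw [hy1def, norm_add_sq_real]
      have h1 : 0 ≤ ⟪y, T • e⟫_ℝ := by
        rw [real_inner_smul_right]
        exact mul_nonneg hT0 hye
      have h2 : ‖T • e‖ = T * ‖e‖ := by
        rw [norm_smul, Real.norm_eq_abs, abs_of_nonneg hT0]
      rw [h2, hTe]
      nlinarith [sq_nonneg ‖y‖, norm_nonneg y]
    set seg1 : Set (EuclideanSpace ℝ (Fin (p + q))) :=
      (fun t : ℝ => y + t • e) '' Set.Icc 0 T with hseg1def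
    set seg2 : Set (EuclideanSpace ℝ (Fin (p + q))) :=
      (fun s : ℝ => y1 + s • c) '' Set.Icc 0 S with hseg2def
    have hseg1pre : IsPreconnected seg1 :=
      isPreconnected_Icc.image _
        (continuous_const.add (continuous_id.smul continuous_const)).continuousOn
    have hseg2pre : IsPreconnected seg2 :=
      isPreconnected_Icc.image _
        (continuous_const.add (continuous_id.smul continuous_const)).continuousOn
    have hseg1sub : seg1 ⊆ {u | α < ⟪c, u⟫_ℝ} \
        Metric.closedBall (0 : EuclideanSpace ℝ (Fin (p + q))) R := by
      rintro - ⟨t, ⟨ht0, htT⟩, rfl⟩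
      constructor
      · show α < ⟪c, y + t • e⟫_ℝ
        rw [inner_add_right, real_inner_smul_right, hce]
        simpa using hy1
      · rw [hball]
        have hnorm : ‖y‖ ^ 2 ≤ ‖y + t • e‖ ^ 2 := by
          rw [norm_add_sq_real]
          have h1 : 0 ≤ ⟪y, t • e⟫_ℝ := by
            rw [real_inner_smul_right]
            exact mul_nonneg ht0 hye
          nlinarith [sq_nonneg ‖t • e‖]
        have hR2 : R ^ 2 < ‖y‖ ^ 2 := by nlinarith
        exact aux_lt_of_sq hR.le (norm_nonneg _) (lt_of_lt_of_le hR2 hnorm)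
    have hseg2sub : seg2 ⊆ {u | α < ⟪c, u⟫_ℝ} \
        Metric.closedBall (0 : EuclideanSpace ℝ (Fin (p + q))) R := by
      rintro - ⟨s, ⟨hs0, hsS⟩, rfl⟩
      constructor
      · show α < ⟪c, y1 + s • c⟫_ℝ
        rw [inner_add_right, real_inner_smul_right, hy1def, inner_add_right,
          real_inner_smul_right, hce]
        have := mul_nonneg hs0 hcc.le
        linarith
      · rw [hball]
        have h1 : ‖y1‖ ≤ ‖y1 + s • c‖ + ‖s • c‖ := by
          have h2 : y1 = (y1 + s • c) - s • c := by abel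
          calc ‖y1‖ = ‖(y1 + s • c) - s • c‖ := by rw [← h2]
          _ ≤ ‖y1 + s • c‖ + ‖s • c‖ := norm_sub_le _ _
        have h3 : ‖s • c‖ ≤ S * ‖c‖ := by
          rw [norm_smul, Real.norm_eq_abs, abs_of_nonneg hs0]
          exact mul_le_mul_of_nonneg_right hsS (norm_nonneg c)
        linarith
    -- joints
    have hyS1 : y ∈ seg1 := ⟨0, ⟨le_refl 0, hT0⟩, by simp⟩
    have hy1S1 : y1 ∈ seg1 := ⟨T, ⟨hT0, le_refl T⟩, rfl⟩
    have hy1S2 : y1 ∈ seg2 := ⟨0, ⟨le_refl 0, hS0⟩, by simp⟩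
    have hy2S2 : y1 + S • c ∈ seg2 := ⟨S, ⟨hS0, le_refl S⟩, rfl⟩
    have hy2F : y1 + S • c ∈ F := by
      show K ≤ ⟪c, y1 + S • c⟫_ℝ
      rw [inner_add_right, real_inner_smul_right, hy1def, inner_add_right,
        real_inner_smul_right, hce]
      linarith
    refine ⟨seg1 ∪ seg2 ∪ F, ?_, ?_, ?_, ?_⟩
    · exact Set.union_subset (Set.union_subset hseg1sub hseg2sub) hFsub
    · exact Or.inr hx₀F
    · exact Or.inl (Or.inl hyS1)
    · refine IsPreconnected.union (y1 + S • c) (Or.inr hy2S2) hy2F ?_ hFpre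
      exact IsPreconnected.union y1 hy1S1 hy1S2 hseg1pre hseg2pre
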